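/- Let R be a left noetherian ring. Then every direct sum of a family of injective left R-modules is injective. -/

import Mathlib

universe u v

/-- A submodule `A ≤ M` is pure if every finite system of `R`-linear equations with
parameters in `A` that is solvable in `M` is solvable in `A`. -/
def IsPureSubmodule (R : Type u) [Ring R] {M : Type v} [AddCommGroup M] [Module R M]
    (A : Submodule R M) : Prop :=
  ∀ (k n : ℕ) (c : Fin k → Fin n → R) (a : Fin k → M),
    (∀ i, a i ∈ A) →
    (∃ x : Fin n → M, ∀ i, (∑ j, c i j • x j) = a i) →
    ∃ x : Fin n → M, (∀ j, x j ∈ A) ∧ ∀ i, (∑ j, c i j • x j) = a i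

/-- A linear map is a pure embedding if it is injective and its range is a pure submodule. -/
def IsPureEmbedding (R : Type u) [Ring R] {M N : Type v} [AddCommGroup M] [Module R M]
    [AddCommGroup N] [Module R N] (f : M →ₗ[R] N) : Prop :=
  Function.Injective f ∧ IsPureSubmodule R (LinearMap.range f)

/-- A module is pure-injective if it is a direct summand of every module containing it
as a pure submodule, i.e. every pure embedding out of it admits a retraction. -/
def IsPureInjective (R : Type u) [Ring R] (M : Type v) [AddCommGroup M] [Module R M] : Prop :=
  ∀ (N : Type v) [AddCommGroup N] [Module R N] (f : M →ₗ[R] N),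
    IsPureEmbedding R f → ∃ g : N →ₗ[R] M, g ∘ₗ f = LinearMap.id

/-- A module is absolutely pure if it is pure in every module containing it. -/
def IsAbsolutelyPure (R : Type u) [Ring R] (M : Type v) [AddCommGroup M] [Module R M] : Prop :=
  ∀ (N : Type v) [AddCommGroup N] [Module R N] (f : M →ₗ[R] N),
    Function.Injective f → IsPureSubmodule R (LinearMap.range f)

/-- over a left noetherian ring, every direct sum of injective modules
is injective. -/
theorem stmt8 (R : Type u) [Ring R] [IsNoetherianRing R]
    (ι : Type u) (M : ι → Type u) [∀ i, AddCommGroup (M i)] [∀ i, Module R (M i)]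
    (h : ∀ i, Module.Injective R (M i)) :
    Module.Injective R (DirectSum ι M) := by
  classical
  apply Module.Baer.injective
  intro I g
  have hMB : ∀ i, Module.Baer R (M i) := fun i => Module.Baer.of_injective (h i)
  obtain ⟨s, hs⟩ : I.FG := IsNoetherian.noetherian I
  have hmem : ∀ y ∈ s, y ∈ I := fun y hy => hs ▸ Submodule.subset_span hy
  set S : Finset ι :=
    s.attach.biUnion (fun t => (g ⟨t.1, hmem t.1 t.2⟩).support) with hSdef
  have hsupp : ∀ (x : R) (hx : x ∈ I) (j : ι), j ∉ S → (g ⟨x, hx⟩) j = 0 := by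
    intro x hx
    have hx' : x ∈ Ideal.span (s : Set R) := hs.symm ▸ hx
    refine Submodule.span_induction
      (p := fun y _ => ∀ (hy : y ∈ I) (j : ι), j ∉ S → (g ⟨y, hy⟩) j = 0)
      ?_ ?_ ?_ ?_ hx' hx
    · intro y hy hyI j hj
      by_contra hne
      exact hj (Finset.mem_biUnion.mpr ⟨⟨y, hy⟩, s.mem_attach _,
        DFinsupp.mem_support_iff.mpr (by convert hne)⟩)
    · intro _ j hj
      have : (⟨(0:R), I.zero_mem⟩ : I) = 0 := rfl
      rw [show (⟨(0:R), ‹(0:R) ∈ I›⟩ : I) = 0 from rfl]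
      simp
    · intro a b ha hb iha ihb hab j hj
      have : (⟨a + b, hab⟩ : I) = ⟨a, (hs ▸ ha : a ∈ I)⟩ + ⟨b, (hs ▸ hb : b ∈ I)⟩ := rfl
      rw [this, map_add, DirectSum.add_apply, iha _ j hj, ihb _ j hj, add_zero]
    · intro r a ha iha hra j hj
      have : (⟨r • a, hra⟩ : I) = r • ⟨a, (hs ▸ ha : a ∈ I)⟩ := rfl
      rw [this, map_smul, DirectSum.smul_apply, iha _ j hj, smul_zero]
  choose G hG using fun i => hMB i I ((DirectSum.component R ι M i) ∘ₗ g)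
  refine ⟨∑ i ∈ S, (DirectSum.lof R ι M i) ∘ₗ G i, ?_⟩
  intro x mem
  have : ∀ j, ((∑ i ∈ S, (DirectSum.lof R ι M i) ∘ₗ G i) x) j = (g ⟨x, mem⟩) j := by
    intro j
    rw [LinearMap.sum_apply]
    rw [DFinsupp.finset_sum_apply]
    by_cases hj : j ∈ S
    · rw [Finset.sum_eq_single j]
      · simp only [LinearMap.comp_apply]
        rw [DirectSum.lof_apply, hG j x mem]
        rfl
      · intro i _ hij
        simp only [LinearMap.comp_apply, DirectSum.lof_eq_of]
        exact DirectSum.of_eq_of_ne _ _ _ hij.symm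
      · intro hjS; exact absurd hj hjS
    · rw [hsupp x mem j hj]
      refine Finset.sum_eq_zero fun i hi => ?_
      simp only [LinearMap.comp_apply, DirectSum.lof_eq_of]
      exact DirectSum.of_eq_of_ne _ _ _ (fun e => hj (e ▸ hi))
  exact DFinsupp.ext this
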